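/- The inference rule (𝒱-spec) preserves validity over any completely additive modal algebra: if 𝔄 is a Boolean algebra with completely additive operator ◇ (dual □), and θ ↦ θ̂ denotes interpretation of formulas, and for all valuations the premises p → χ(p), A χ(p) → A p, and α → □χ(p) are valid (where p does not occur in α, and A φ is interpreted as ⊤ when the value of φ is ⊤ and ⊥ otherwise), then α → □⊥ is valid over 𝔄. Algebraically: if for every c ∈ 𝔄, c ≤ χ̂(c) and (χ̂(c) = ⊤ implies c = ⊤) and θ̂(α) ≤ □χ̂(c), where χ̂(c) denotes the value of χ(p) under p ↦ c (fixed values for other variables), then θ̂(α) ≤ □⊥. -/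
import Mathlib


/-- The dual box of an operator `f` on a Boolean algebra. -/
def mbox {α : Type*} [BooleanAlgebra α] (f : α → α) (x : α) : α := (f xᶜ)ᶜ

/-- Soundness of the rule (𝒱-spec) over completely additive modal algebras,
in algebraic form: if `g : α → α` (the interpretation of `χ(p)` as the value
of `p` varies) satisfies `c ≤ g c`, `g c = ⊤ → c = ⊤`, and `a ≤ □(g c)` for
all `c`, then `a ≤ □⊥`. -/
theorem stmt_17 {α : Type*} [BooleanAlgebra α] (f : α → α)
    (hjoin : ∀ x y : α, f (x ⊔ y) = f x ⊔ f y) (hbot : f ⊥ = ⊥)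
    (hV : ∀ (X : Set α) (s : α), IsLUB X s → IsLUB (f '' X) (f s))
    (a : α) (g : α → α)
    (h1 : ∀ c : α, c ≤ g c)
    (h2 : ∀ c : α, g c = ⊤ → c = ⊤)
    (h3 : ∀ c : α, a ≤ mbox f (g c)) :
    a ≤ mbox f ⊥ := by
  set X : Set α := {y | a ⊓ f y = ⊥} with hXdef
  have hmem : ∀ c : α, (g c)ᶜ ∈ X := by
    intro c
    have h : a ≤ (f ((g c)ᶜ))ᶜ := by simpa [mbox] using h3 c
    have hd : Disjoint a (f ((g c)ᶜ)) := le_compl_iff_disjoint_right.mp h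
    exact disjoint_iff.mp hd
  have hXtop : IsLUB X (⊤ : α) := by
    constructor
    · intro y _; exact le_top
    · intro s hs
      have hle : (g s)ᶜ ≤ s := hs (hmem s)
      have hle2 : (g s)ᶜ ≤ g s := hle.trans (h1 s)
      have hb : (g s)ᶜ = ⊥ := le_bot_iff.mp (by
        have := le_inf hle2 (le_refl (g s)ᶜ)
        simpa using this)
      have ht : g s = ⊤ := by simpa using congrArg compl hb
      exact (h2 s ht).ge
  have hlub := hV X ⊤ hXtop
  have hub : f ⊤ ≤ aᶜ := by
    apply hlub.2
    rintro z ⟨y, hy, rfl⟩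
    exact le_compl_iff_disjoint_left.mpr (disjoint_iff.mpr hy)
  have : a ≤ (f ⊤)ᶜ := le_compl_iff_disjoint_right.mpr
    (le_compl_iff_disjoint_left.mp hub)
  simpa [mbox] using this
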